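/- Let (R,m) be an F-finite reduced Noetherian local ring of prime characteristic p, let e ≥ 1 and q = p^e, and let φ : R → R be an additive map satisfying φ(r^q·x) = r·φ(x) for all r, x ∈ R. Suppose T is an ideal of R such that φ(T) ⊆ T, T ∩ R^o ≠ ∅, and T ⊆ J for every ideal J with φ(J) ⊆ J and J ∩ R^o ≠ ∅ (i.e., T = τ(R,φ)). If T is a principal ideal, then R is weakly F-regular: I* = I for every ideal I of R. -/

import Mathlib

/-- The `q`-th Frobenius power `I^{[q]}` of an ideal `I`: the ideal generated by
the `q`-th powers of the elements of `I`. -/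
def frobeniusPower {R : Type*} [CommRing R] (I : Ideal R) (q : ℕ) : Ideal R :=
  Ideal.span ((fun a => a ^ q) '' (I : Set R))

/-- `Rreg c` means `c ∈ R^o`, i.e. `c` avoids every minimal prime of `R`. -/
def Rreg {R : Type*} [CommRing R] (c : R) : Prop :=
  ∀ P ∈ minimalPrimes R, c ∉ P

/-- `x` lies in the tight closure `I*` of `I` (characteristic `p`):
there is `c ∈ R^o` with `c * x^(p^e) ∈ I^{[p^e]}` for all `e ≫ 0`. -/
def InTightClosure {R : Type*} [CommRing R] (p : ℕ) (I : Ideal R) (x : R) : Prop :=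
  ∃ c, Rreg c ∧ ∃ N : ℕ, ∀ e ≥ N, c * x ^ p ^ e ∈ frobeniusPower I (p ^ e)

/-- The tight closure `I*` of `I`, as an ideal: the span of the set of elements in the
tight closure (this set is already an ideal, so taking the span is harmless). -/
def tightClosure {R : Type*} [CommRing R] (p : ℕ) (I : Ideal R) : Ideal R :=
  Ideal.span {x | InTightClosure p I x}

/-- If the test ideal `τ(R,φ)` (the smallest `φ`-compatible ideal meeting
`R^o`) is principal, then `R` is weakly F-regular: `I* = I` for every ideal `I`. -/
theorem weakly_F_regular_of_principal_test_ideal {R : Type*} [CommRing R] [IsNoetherianRing R]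
    [IsLocalRing R] [IsReduced R] (p : ℕ) [Fact p.Prime] [CharP R p]
    (hFF : (frobenius R p).Finite)
    (e q : ℕ) (he : 1 ≤ e) (hq : q = p ^ e)
    (φ : R →+ R) (hφ : ∀ r x : R, φ (r ^ q * x) = r * φ x)
    (T : Ideal R)
    (hTcomp : ∀ x ∈ T, φ x ∈ T)
    (hTreg : ∃ c ∈ T, Rreg c)
    (hTmin : ∀ J : Ideal R, (∀ x ∈ J, φ x ∈ J) → (∃ c ∈ J, Rreg c) → T ≤ J)
    (hprin : Submodule.IsPrincipal T) :
    ∀ I : Ideal R, tightClosure p I = I := by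
  classical
  intro I
  have hp : p.Prime := Fact.out
  obtain ⟨cT, hcTT, hcTreg⟩ := hTreg
  have hfin : (minimalPrimes R).Finite := minimalPrimes.finite_of_isNoetherianRing R
  -- the easy inclusion `I ≤ I*`
  have heasy : I ≤ tightClosure p I := by
    intro y hy
    refine Ideal.subset_span ⟨cT, hcTreg, 0, fun n _ => ?_⟩
    exact Ideal.mul_mem_left _ cT (Ideal.subset_span ⟨y, hy, rfl⟩)
  refine le_antisymm (Ideal.span_le.mpr ?_) heasy
  intro x hxTC
  obtain ⟨c₀, hc₀reg, N, hxN⟩ := hxTC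
  show x ∈ I
  by_cases hnu : ∃ c, Rreg c ∧ c ∈ IsLocalRing.maximalIdeal R
  · -- main case : there is a nonunit in `R^o`
    obtain ⟨cnu, hcnureg, hcnum⟩ := hnu
    obtain ⟨g, hgT0⟩ := hprin.1
    have hgT : T = Ideal.span {g} := by rw [hgT0, Ideal.submodule_span_eq]
    have hgmem : g ∈ T := by rw [hgT]; exact Ideal.subset_span rfl
    have hgreg : Rreg g := by
      intro P hP hg
      have h1 : cT ∈ Ideal.span {g} := by rw [← hgT]; exact hcTT
      obtain ⟨a, ha⟩ := Ideal.mem_span_singleton'.mp h1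
      exact hcTreg P hP (by rw [← ha]; exact Ideal.mul_mem_left P a hg)
    -- `g` is a nonzerodivisor since `R` is reduced
    have hnzd : ∀ y : R, g * y = 0 → y = 0 := by
      intro y hy
      have hy' : y ∈ nilradical R := by
        rw [nilradical_eq_sInf]
        refine Submodule.mem_sInf.mpr ?_
        intro J hJ
        haveI : Ideal.IsPrime J := hJ
        obtain ⟨P, hP, hPJ⟩ := Ideal.exists_minimalPrimes_le (bot_le : (⊥ : Ideal R) ≤ J)
        refine hPJ ?_
        have hgy : g * y ∈ P := by rw [hy]; exact P.zero_mem
        exact (hP.1.1.mem_or_mem hgy).resolve_left (hgreg P hP)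
      rw [nilradical_eq_zero] at hy'
      simpa using hy'
    have hcancel : ∀ a b : R, g * a = g * b → a = b := by
      intro a b h
      have := hnzd (a - b) (by rw [mul_sub, h, sub_self])
      exact sub_eq_zero.mp this
    -- define `ψ = g⁻¹ ∘ φ ∘ (g ·)`
    have hstep : ∀ r : R, ∃ s, g * s = φ (g * r) := by
      intro r
      have h1 : φ (g * r) ∈ Ideal.span {g} := by
        rw [← hgT]; exact hTcomp _ (Ideal.mul_mem_right r T hgmem)
      obtain ⟨s, hs⟩ := Ideal.mem_span_singleton'.mp h1
      exact ⟨s, by rw [mul_comm]; exact hs⟩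
    choose ψ hψ using hstep
    have hψadd : ∀ a b : R, ψ (a + b) = ψ a + ψ b := by
      intro a b
      refine hcancel _ _ ?_
      rw [mul_add, hψ, hψ, hψ, ← map_add, ← mul_add]
    have hψs : ∀ r y : R, ψ (r ^ q * y) = r * ψ y := by
      intro r y
      refine hcancel _ _ ?_
      calc g * ψ (r ^ q * y) = φ (g * (r ^ q * y)) := hψ _
        _ = φ (r ^ q * (g * y)) := by rw [show g * (r ^ q * y) = r ^ q * (g * y) by ring]
        _ = r * φ (g * y) := hφ r (g * y)
        _ = r * (g * ψ y) := by rw [hψ]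
        _ = g * (r * ψ y) := by ring
    have hψ0 : ψ 0 = 0 := by
      have := hψs 0 0
      simpa using this
    let Ψ : R →+ R := AddMonoidHom.mk' ψ hψadd
    -- `ψ` maps `I^{[q m]}` into `I^{[m]}`
    have hpsiFP : ∀ (m : ℕ) (z : R), z ∈ frobeniusPower I (q * m) → ψ z ∈ frobeniusPower I m := by
      intro m z hz
      rw [frobeniusPower] at hz
      obtain ⟨f, hfsupp, hfsum⟩ := Submodule.mem_span_set.mp hz
      have hsum : z = ∑ i ∈ f.support, f i * i := by
        rw [← hfsum]; simp [Finsupp.sum, smul_eq_mul]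
      have hψz : ψ z = ∑ i ∈ f.support, ψ (f i * i) := by
        rw [hsum]
        exact map_sum Ψ _ _
      rw [hψz]
      refine Ideal.sum_mem _ ?_
      intro i hi
      obtain ⟨a, haI, hai⟩ := hfsupp (Finset.mem_coe.mpr hi)
      have hai' : a ^ (q * m) = i := hai
      have h2 : f i * i = (a ^ m) ^ q * f i := by
        rw [← hai', mul_comm q m, pow_mul]; ring
      rw [h2, hψs]
      exact Ideal.mul_mem_right (ψ (f i)) _ (Ideal.subset_span ⟨a, haI, rfl⟩)
    -- key lemma: every ψ-compatible ideal meeting R^o is ⊤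
    have lemL : ∀ J : Ideal R, (∀ y ∈ J, ψ y ∈ J) → (∃ c ∈ J, Rreg c) → J = ⊤ := by
      intro J hJc hJr
      obtain ⟨c, hcJ, hcreg⟩ := hJr
      let gJ : Ideal R :=
        { carrier := {z | ∃ y ∈ J, z = g * y}
          add_mem' := by
            rintro a b ⟨y1, hy1, rfl⟩ ⟨y2, hy2, rfl⟩
            exact ⟨y1 + y2, J.add_mem hy1 hy2, by ring⟩
          zero_mem' := ⟨0, J.zero_mem, by ring⟩
          smul_mem' := by
            rintro r z ⟨y, hy, rfl⟩
            exact ⟨r * y, J.mul_mem_left r hy, by rw [smul_eq_mul]; ring⟩ }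
      have hTle : T ≤ gJ := by
        refine hTmin gJ ?_ ⟨g * c, ⟨c, hcJ, rfl⟩, ?_⟩
        · rintro z ⟨y, hyJ, rfl⟩
          exact ⟨ψ y, hJc y hyJ, (hψ y).symm⟩
        · intro P hP hgc
          rcases hP.1.1.mem_or_mem hgc with h | h
          exacts [hgreg P hP h, hcreg P hP h]
      obtain ⟨y, hyJ, hgy⟩ := hTle hgmem
      have hy1 : y = 1 := hcancel y 1 (by rw [mul_one, ← hgy])
      rw [Ideal.eq_top_iff_one, ← hy1]; exact hyJ
    -- the image of ψ as an ideal
    let Upsi : Ideal R :=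
      { carrier := Set.range ψ
        add_mem' := by
          rintro a b ⟨s, rfl⟩ ⟨t, rfl⟩
          exact ⟨s + t, hψadd s t⟩
        zero_mem' := ⟨0, hψ0⟩
        smul_mem' := by
          rintro r z ⟨s, rfl⟩
          exact ⟨r ^ q * s, by rw [hψs, smul_eq_mul]⟩ }
    have hUmem : ∀ z : R, z ∈ Upsi ↔ ∃ s, ψ s = z := fun z => Iff.rfl
    have hUnotle : ∀ P ∈ minimalPrimes R, ¬(Upsi ≤ P) := by
      intro P hP hle
      have hW : Ideal.span {cnu} ⊔ Upsi = ⊤ := by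
        refine lemL _ ?_ ⟨cnu, Submodule.mem_sup_left (Ideal.subset_span rfl), hcnureg⟩
        intro y _
        exact Submodule.mem_sup_right ⟨y, rfl⟩
      have h1 : (1 : R) ∈ Ideal.span {cnu} ⊔ Upsi := by rw [hW]; trivial
      obtain ⟨a, ha, b, hb, hab⟩ := Submodule.mem_sup.mp h1
      have ham : a ∈ IsLocalRing.maximalIdeal R := by
        have : Ideal.span {cnu} ≤ IsLocalRing.maximalIdeal R :=
          Ideal.span_le.mpr (by simpa using hcnum)
        exact this ha
      have hbm : b ∈ IsLocalRing.maximalIdeal R :=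
        IsLocalRing.le_maximalIdeal hP.1.1.ne_top (hle hb)
      have h2 : (1 : R) ∈ IsLocalRing.maximalIdeal R := by
        rw [← hab]; exact add_mem ham hbm
      exact (IsLocalRing.maximalIdeal.isMaximal R).ne_top
        (Ideal.eq_top_of_isUnit_mem _ h2 isUnit_one)
    -- prime avoidance gives an element of R^o in the image of ψ
    have hnotsub : ¬((Upsi : Set R) ⊆ ⋃ P ∈ (hfin.toFinset : Set (Ideal R)), (P : Set R)) := by
      rw [Ideal.subset_union_prime (⊥ : Ideal R) ⊥
        (fun P hPs _ _ => (hfin.mem_toFinset.mp hPs).1.1)]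
      rintro ⟨P, hPs, hle⟩
      exact hUnotle P (hfin.mem_toFinset.mp hPs) hle
    obtain ⟨u, huU, huni⟩ := Set.not_subset.mp hnotsub
    have hureg : Rreg u := by
      intro P hP hu
      exact huni (Set.mem_biUnion (show P ∈ (hfin.toFinset : Set (Ideal R)) by
        simpa using hP) hu)
    have hUtop : Upsi = ⊤ := lemL _ (fun y _ => ⟨y, rfl⟩) ⟨u, huU, hureg⟩
    obtain ⟨u1, hu1⟩ : ∃ v, ψ v = 1 := by
      have h1 : (1 : R) ∈ Upsi := by rw [hUtop]; trivial
      exact h1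
    -- the descending chain of multiplier ideals
    let G : ℕ → Ideal R := fun n =>
      { carrier := {c | ∀ k, n ≤ k → c * x ^ q ^ k ∈ frobeniusPower I (q ^ k)}
        add_mem' := by
          intro a b ha hb k hk
          rw [add_mul]
          exact Ideal.add_mem _ (ha k hk) (hb k hk)
        zero_mem' := by
          intro k hk
          rw [zero_mul]
          exact Ideal.zero_mem _
        smul_mem' := by
          intro r c hc k hk
          rw [smul_eq_mul, mul_assoc]
          exact Ideal.mul_mem_left _ r (hc k hk) }
    have hGmem : ∀ (n : ℕ) (c : R),
        c ∈ G n ↔ ∀ k, n ≤ k → c * x ^ q ^ k ∈ frobeniusPower I (q ^ k) := fun n c => Iff.rfl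
    have hGstep : ∀ (n : ℕ) (c : R), c ∈ G (n + 1) → ψ c ∈ G n := by
      intro n c hc
      rw [hGmem] at hc ⊢
      intro k hk
      have h1 : c * x ^ q ^ (k + 1) ∈ frobeniusPower I (q ^ (k + 1)) := hc (k + 1) (by omega)
      have h2 : ψ c * x ^ q ^ k = ψ (c * x ^ q ^ (k + 1)) := by
        rw [show c * x ^ q ^ (k + 1) = (x ^ q ^ k) ^ q * c by rw [← pow_mul, ← pow_succ]; ring, hψs]
        ring
      rw [h2]
      have h3 : c * x ^ q ^ (k + 1) ∈ frobeniusPower I (q * q ^ k) := by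
        rwa [show q * q ^ k = q ^ (k + 1) by rw [pow_succ]; ring]
      exact hpsiFP (q ^ k) _ h3
    have hGN : G N = ⊤ := by
      refine lemL _ (fun c hc => hGstep N c (fun k hk => hc k (by omega))) ⟨c₀, ?_, hc₀reg⟩
      intro k hk
      have hek : N ≤ e * k := le_trans hk (Nat.le_mul_of_pos_left k (by omega))
      have h1 := hxN (e * k) hek
      rwa [show q ^ k = p ^ (e * k) by rw [hq, ← pow_mul]]
    have hGdown : ∀ n, G n = ⊤ → G 0 = ⊤ := by
      intro n
      induction n with
      | zero => exact id
      | succ n ih =>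
        intro h
        refine ih ?_
        rw [Ideal.eq_top_iff_one]
        have h1 : u1 ∈ G (n + 1) := by rw [h]; trivial
        have h2 := hGstep n u1 h1
        rwa [hu1] at h2
    have hG0 : (1 : R) ∈ G 0 := by rw [hGdown N hGN]; trivial
    have hfin1 := (hGmem 0 1).mp hG0 0 (le_refl 0)
    rw [pow_zero, pow_one, one_mul] at hfin1
    have hFP1 : frobeniusPower I 1 = I := by
      rw [frobeniusPower]
      simp [pow_one, Ideal.span_eq]
    rwa [hFP1] at hfin1
  · -- degenerate case : every element of R^o is a unit, so R is a field
    have hmP : ∀ y ∈ IsLocalRing.maximalIdeal R, ∃ P ∈ minimalPrimes R, y ∈ P := by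
      intro y hy
      by_contra h
      push_neg at h
      exact hnu ⟨y, fun P hP => h P hP, hy⟩
    have hsub : ((IsLocalRing.maximalIdeal R : Ideal R) : Set R) ⊆
        ⋃ P ∈ (hfin.toFinset : Set (Ideal R)), (P : Set R) := by
      intro y hy
      obtain ⟨P, hP, hyP⟩ := hmP y hy
      exact Set.mem_biUnion (by simpa using hP) hyP
    obtain ⟨P, hPs, hmleP⟩ := (Ideal.subset_union_prime (⊥ : Ideal R) ⊥
      (fun P hPs _ _ => (hfin.mem_toFinset.mp hPs).1.1)).mp hsub
    have hPmin : P ∈ minimalPrimes R := hfin.mem_toFinset.mp hPs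
    have hmbot : IsLocalRing.maximalIdeal R = ⊥ := by
      have hm_le_nil : IsLocalRing.maximalIdeal R ≤ nilradical R := by
        rw [nilradical_eq_sInf]
        refine le_sInf ?_
        intro J hJ
        haveI : Ideal.IsPrime J := hJ
        obtain ⟨P', hP', hP'J⟩ := Ideal.exists_minimalPrimes_le (bot_le : (⊥ : Ideal R) ≤ J)
        refine le_trans (le_trans hmleP ?_) hP'J
        exact hPmin.2 ⟨hP'.1.1, bot_le⟩
          ((IsLocalRing.le_maximalIdeal hP'.1.1.ne_top).trans hmleP)
      rw [nilradical_eq_zero] at hm_le_nil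
      exact le_bot_iff.mp hm_le_nil
    rcases eq_or_ne I ⊤ with rfl | hItop
    · exact Submodule.mem_top
    · have hIbot : I = ⊥ := by
        have := IsLocalRing.le_maximalIdeal hItop
        rw [hmbot] at this
        exact le_bot_iff.mp this
      have h1 := hxN N le_rfl
      have hFPbot : frobeniusPower (⊥ : Ideal R) (p ^ N) ≤ ⊥ := by
        rw [frobeniusPower]
        refine Ideal.span_le.mpr ?_
        rintro _ ⟨a, ha, rfl⟩
        have ha0 : a = 0 := by simpa using ha
        simp [ha0, zero_pow (pow_ne_zero N hp.ne_zero)]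
      rw [hIbot] at h1 ⊢
      have h2 : c₀ * x ^ p ^ N = 0 := by simpa using hFPbot h1
      have hc₀u : IsUnit c₀ := by
        by_contra hcu
        exact hnu ⟨c₀, hc₀reg, by simp [IsLocalRing.mem_maximalIdeal, mem_nonunits_iff, hcu]⟩
      have h3 : x ^ p ^ N = 0 := by
        rcases hc₀u with ⟨v, rfl⟩
        exact (Units.mul_right_eq_zero v).mp h2
      have hx0 : x = 0 := by
        have : IsNilpotent x := ⟨p ^ N, h3⟩
        exact this.eq_zero
      simp [hx0]
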